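/- arXiv:1309.1445 — 3 statements merged into one kernel-verified Lean document; each statement's English description precedes it below -/
import Mathlib

section
/- Let S be an infinite set of positive integers. Then for every real number C and every natural number d, there exist infinitely many natural numbers n with p_S(n) > C·n^d. In other words, the number of partitions of n into parts from an infinite set S is not bounded above by any polynomial in n. -/
private def buildParts {m : ℕ} (s a : Fin m → ℕ) : Multiset ℕ :=
  ∑ j : Fin m, Multiset.replicate (a j) (s j)

private lemma mem_buildParts {m : ℕ} {s a : Fin m → ℕ} {x : ℕ}
    (hx : x ∈ buildParts s a) : ∃ j, x = s j := by
  simp only [buildParts, Multiset.mem_sum, Finset.mem_univ, true_and] at hx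
  obtain ⟨j, hj⟩ := hx
  exact ⟨j, Multiset.eq_of_mem_replicate hj⟩

private lemma sum_buildParts {m : ℕ} (s a : Fin m → ℕ) :
    (buildParts s a).sum = ∑ j : Fin m, a j * s j := by
  rw [buildParts, Multiset.sum_sum]
  simp [Multiset.sum_replicate, smul_eq_mul]

private lemma count_buildParts {m : ℕ} {s : Fin m → ℕ} (hinj : Function.Injective s)
    (a : Fin m → ℕ) (k : Fin m) :
    Multiset.count (s k) (buildParts s a) = a k := by
  rw [buildParts, Multiset.count_sum']
  rw [Finset.sum_eq_single k]
  · simp [Multiset.count_replicate]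
  · intro j _ hj
    rw [Multiset.count_replicate, if_neg (fun h => hj (hinj h))]
  · simp

/-- For an infinite set `S` of positive integers, the number `p_S(n)` of partitions
of `n` into parts from `S` is not bounded above by any polynomial in `n`: for every
real `C` and every natural `d`, there are infinitely many `n` with
`p_S(n) > C * n^d`. -/
theorem stmt3 (S : Set ℕ) (hS : ∀ s ∈ S, 0 < s) (hinf : S.Infinite)
    (C : ℝ) (d : ℕ) :
    {n : ℕ |
      C * (n : ℝ) ^ d <
        (Nat.card {p : n.Partition // ∀ i ∈ p.parts, i ∈ S} : ℝ)}.Infinite := by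
  classical
  set E := hinf.natEmbedding with hE
  set s : Fin (d + 2) → ℕ := fun j => (E j.val).val with hsdef
  have hsS : ∀ j, s j ∈ S := fun j => (E j.val).2
  have hspos : ∀ j, 0 < s j := fun j => hS _ (hsS j)
  have hsinj : Function.Injective s := by
    intro j k h
    have := E.injective (Subtype.ext h)
    exact Fin.ext (by exact_mod_cast this)
  set P : ℕ := ∏ j : Fin (d + 2), s j with hPdef
  have hPpos : 0 < P := Finset.prod_pos fun j _ => hspos j
  have hdvd : ∀ j, s j ∣ P := fun j => Finset.dvd_prod_of_mem s (Finset.mem_univ j)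
  have hqpos : ∀ j, 0 < P / s j := fun j =>
    Nat.div_pos (Nat.le_of_dvd hPpos (hdvd j)) (hspos j)
  -- key counting bound
  have key : ∀ t : ℕ, ((t + 1) ^ (d + 1) : ℕ) ≤
      Nat.card {p : ((d + 1) * t * P).Partition // ∀ i ∈ p.parts, i ∈ S} := by
    intro t
    set b : (Fin (d + 1) → Fin (t + 1)) → Fin (d + 2) → ℕ :=
      fun c => Fin.cons ((d + 1) * t - ∑ i, (c i : ℕ)) (fun i => (c i : ℕ)) with hbdef
    have hcle : ∀ c : Fin (d + 1) → Fin (t + 1), ∑ i, (c i : ℕ) ≤ (d + 1) * t := by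
      intro c
      calc ∑ i, (c i : ℕ) ≤ ∑ _i : Fin (d + 1), t :=
            Finset.sum_le_sum fun i _ => Nat.lt_succ_iff.mp (c i).isLt
        _ = (d + 1) * t := by simp [Finset.sum_const, mul_comm]
    have hbsum : ∀ c, ∑ j, b c j = (d + 1) * t := by
      intro c
      rw [hbdef]
      rw [Fin.sum_cons]
      exact Nat.sub_add_cancel (hcle c)
    set F : (Fin (d + 1) → Fin (t + 1)) →
        {p : ((d + 1) * t * P).Partition // ∀ i ∈ p.parts, i ∈ S} := fun c =>
      ⟨⟨buildParts s (fun j => b c j * (P / s j)),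
        fun hi => by
          obtain ⟨j, rfl⟩ := mem_buildParts hi
          exact hspos j,
        by
          rw [sum_buildParts]
          have : ∀ j, b c j * (P / s j) * s j = b c j * P := by
            intro j
            rw [mul_assoc, Nat.div_mul_cancel (hdvd j)]
          simp only [this]
          rw [← Finset.sum_mul, hbsum]⟩,
        fun i hi => by
          obtain ⟨j, rfl⟩ := mem_buildParts hi
          exact hsS j⟩ with hFdef
    have hFinj : Function.Injective F := by
      intro c c' h
      have hparts : buildParts s (fun j => b c j * (P / s j)) =
          buildParts s (fun j => b c' j * (P / s j)) := by
        have := congrArg (fun p => p.1.parts) h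
        simpa [hFdef] using this
      funext i
      have hcount := congrArg (Multiset.count (s i.succ)) hparts
      rw [count_buildParts hsinj, count_buildParts hsinj] at hcount
      have : b c i.succ = b c' i.succ :=
        Nat.eq_of_mul_eq_mul_right (hqpos i.succ) hcount
      simp only [hbdef, Fin.cons_succ] at this
      exact Fin.ext this
    calc ((t + 1) ^ (d + 1) : ℕ) = Nat.card (Fin (d + 1) → Fin (t + 1)) := by
          simp [Nat.card_eq_fintype_card]
      _ ≤ _ := Nat.card_le_card_of_injective F hFinj
  -- now conclude
  set A : ℝ := C * (((d + 1) * P : ℕ) : ℝ) ^ d with hA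
  set T : ℕ := ⌈A⌉₊ + 1 with hT
  have hmem : ∀ k : ℕ, (d + 1) * (T + k) * P ∈ {n : ℕ |
      C * (n : ℝ) ^ d <
        (Nat.card {p : n.Partition // ∀ i ∈ p.parts, i ∈ S} : ℝ)} := by
    intro k
    set t : ℕ := T + k with ht
    have htpos : (1 : ℕ) ≤ t := by omega
    have htA : A < (t : ℝ) + 1 := by
      have h1 : A ≤ (⌈A⌉₊ : ℝ) := Nat.le_ceil A
      have h2 : (⌈A⌉₊ : ℝ) < (t : ℝ) + 1 := by
        have : ⌈A⌉₊ < t + 1 := by omega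
        exact_mod_cast this
      linarith
    show C * (((d + 1) * t * P : ℕ) : ℝ) ^ d < _
    have hrw : C * (((d + 1) * t * P : ℕ) : ℝ) ^ d = A * (t : ℝ) ^ d := by
      rw [hA, show (((d + 1) * t * P : ℕ) : ℝ) = (((d + 1) * P : ℕ) : ℝ) * (t : ℝ) from by
        push_cast; ring, mul_pow]
      ring
    rw [hrw]
    have htd : (0 : ℝ) < (t : ℝ) ^ d := by positivity
    have step1 : A * (t : ℝ) ^ d < ((t : ℝ) + 1) * (t : ℝ) ^ d :=
      mul_lt_mul_of_pos_right htA htd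
    have step2 : ((t : ℝ) + 1) * (t : ℝ) ^ d ≤ ((t : ℝ) + 1) ^ (d + 1) := by
      rw [pow_succ, mul_comm]
      gcongr
      linarith
    have step3 : (((t + 1) ^ (d + 1) : ℕ) : ℝ) ≤
        (Nat.card {p : ((d + 1) * t * P).Partition // ∀ i ∈ p.parts, i ∈ S} : ℝ) := by
      exact_mod_cast key t
    push_cast at step3
    linarith
  apply Set.infinite_of_injective_forall_mem
    (f := fun k : ℕ => (d + 1) * (T + k) * P) ?_ hmem
  intro a b h
  have h' : (d + 1) * (T + a) * P = (d + 1) * (T + b) * P := h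
  have := Nat.eq_of_mul_eq_mul_right hPpos h'
  have := Nat.eq_of_mul_eq_mul_left (by omega) this
  omega
end

section
/- Let p(n) denote the ordinary partition function, i.e., the number of partitions of the natural number n. Then for every natural number d, the ratio p(n)/n^d tends to infinity as n → ∞; that is, for every real C there exists N such that p(n) > C·n^d for all n ≥ N. -/
open Finset

lemma partition_lower (d n : ℕ) (hn : d + 3 ≤ n) :
    (n / (d + 3)).choose (d + 1) ≤ Nat.card (n.Partition) := by
  classical
  set m := n / (d + 3) with hm
  have hm1 : 1 ≤ m := (Nat.one_le_div_iff (by omega)).2 hn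
  have hmn : m * (d + 3) ≤ n := Nat.div_mul_le_self n (d+3)
  set F : Finset (Finset ℕ) := (Icc 1 m).powersetCard (d + 1) with hF
  have hsum : ∀ S ∈ F, S.sum id ≤ m * (d + 1) := by
    intro S hS
    rw [hF, mem_powersetCard] at hS
    calc S.sum id ≤ S.sum (fun _ => m) := Finset.sum_le_sum (fun i hi => (mem_Icc.1 (hS.1 hi)).2)
    _ = m * (d + 1) := by rw [Finset.sum_const, hS.2, smul_eq_mul, mul_comm]
  have hring : m * (d + 3) = m * (d + 1) + 2 * m := by ring
  have hL : ∀ S ∈ F, m < n - S.sum id := by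
    intro S hS
    have := hsum S hS
    omega
  set f : Finset ℕ → n.Partition := fun S =>
    if hS : S ∈ F then
      ⟨(n - S.sum id) ::ₘ S.val, by
        intro i hi
        rcases Multiset.mem_cons.1 hi with h | h
        · have := hL S hS; omega
        · exact (mem_Icc.1 ((mem_powersetCard.1 (hF ▸ hS)).1 h)).1
        , by
        have h1 : S.val.sum = S.sum id := by
          rw [Finset.sum]; exact congrArg Multiset.sum (Multiset.map_id _).symm
        have := hsum S hS
        rw [Multiset.sum_cons, h1]
        omega⟩
    else Classical.arbitrary _
  have hinj : Set.InjOn f F := by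
    intro S hS' T hT' hST
    have hS := Finset.mem_coe.1 hS'
    have hT := Finset.mem_coe.1 hT'
    have hparts : (f S).parts = (f T).parts := by rw [hST]
    simp only [f, dif_pos hS, dif_pos hT] at hparts
    have key : ∀ U : Finset ℕ, ∀ hU : U ∈ F,
        Multiset.filter (fun x => x ≤ m) ((n - U.sum id) ::ₘ U.val) = U.val := by
      intro U hU
      rw [Multiset.filter_cons_of_neg _ (by have := hL U hU; omega),
        Multiset.filter_eq_self.2]
      intro a ha
      exact (mem_Icc.1 ((mem_powersetCard.1 (hF ▸ hU)).1 ha)).2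
    have : S.val = T.val := by
      rw [← key S hS, hparts, key T hT]
    exact Finset.val_injective this
  have : F.card ≤ Nat.card (n.Partition) := by
    have : Fintype (n.Partition) := inferInstance
    rw [Nat.card_eq_fintype_card]
    exact Finset.card_le_card_of_injOn f (fun _ _ => Finset.mem_univ _) hinj
  rwa [hF, Finset.card_powersetCard, Nat.card_Icc, Nat.add_sub_cancel] at this

/-- The partition function `p(n) = Nat.card (n.Partition)` grows superpolynomially:
for every natural `d` and every real `C` there exists `N` such that
`p(n) > C * n^d` for all `n ≥ N`, i.e. `p(n)/n^d → ∞`. -/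
theorem stmt4 (d : ℕ) :
    ∀ C : ℝ, ∃ N : ℕ, ∀ n : ℕ, N ≤ n →
      C * (n : ℝ) ^ d < (Nat.card (n.Partition) : ℝ) := by
  intro C
  set k := d + 1 with hk
  set c : ℝ := 2 * ((d : ℝ) + 3) with hc
  have hcpos : (0 : ℝ) < c := by positivity
  have hKpos : (0 : ℝ) < (Nat.factorial k : ℝ) := by positivity
  refine ⟨⌈C * (c ^ k * (Nat.factorial k : ℝ))⌉₊ + 2*(d+3)*(d+3) + 2*(d+3)*(d+1) + 1, fun n hn => ?_⟩
  have hB1 : 2*(d+3)*(d+3) ≤ n := by nlinarith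
  have hB2 : 2*(d+3)*(d+1) ≤ n := by nlinarith
  have hA : ⌈C * (c ^ k * (Nat.factorial k : ℝ))⌉₊ + 1 ≤ n := by nlinarith
  have hn3 : d + 3 ≤ n := by nlinarith
  set m := n / (d + 3) with hm
  have hcard := partition_lower d n hn3
  -- m ≥ k
  have hmk : k ≤ m := by
    rw [hm, Nat.le_div_iff_mul_le (by omega)]
    nlinarith
  -- real lower bound on m
  have hdm := Nat.div_add_mod n (d + 3)
  have hmod := Nat.mod_lt n (show 0 < d + 3 by omega)
  have hmlt : n < (d + 3) * m + (d + 3) := by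
    rw [hm]; linarith
  have hmr : (n : ℝ) < ((d : ℝ) + 3) * (m : ℝ) + ((d : ℝ) + 3) := by
    exact_mod_cast hmlt
  -- the nat-sub quantity
  have hsub : ((m + 1 - k : ℕ) : ℝ) = (m : ℝ) + 1 - (k : ℝ) := by
    push_cast [Nat.cast_sub (by omega : k ≤ m + 1)]
    ring
  have hnc : (n : ℝ) / c ≤ ((m + 1 - k : ℕ) : ℝ) := by
    rw [hsub]
    have h2 : ((d : ℝ) + 1) ≤ (n : ℝ) / c := by
      rw [le_div_iff₀ hcpos]
      have : ((2*(d+3)*(d+1) : ℕ) : ℝ) ≤ (n : ℝ) := by exact_mod_cast hB2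
      push_cast at this
      nlinarith
    have h3 : (n : ℝ) / ((d : ℝ) + 3) = 2 * ((n : ℝ) / c) := by
      rw [hc]; field_simp
    have h4 : (n : ℝ) / ((d : ℝ) + 3) - 1 ≤ (m : ℝ) := by
      rw [sub_le_iff_le_add, div_le_iff₀ (show (0:ℝ) < (d:ℝ)+3 by positivity)]
      nlinarith [hmr]
    push_cast [hk]
    linarith
  -- choose lower bound
  have hchoose : ((m + 1 - k : ℕ) : ℝ) ^ k / (Nat.factorial k : ℝ) ≤ (m.choose k : ℝ) := by
    exact_mod_cast Nat.pow_le_choose k m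
  have hccard : (m.choose k : ℝ) ≤ (Nat.card (n.Partition) : ℝ) := by exact_mod_cast hcard
  have hncnn : (0 : ℝ) ≤ (n : ℝ) / c := by positivity
  have hpow : ((n : ℝ) / c) ^ k ≤ ((m + 1 - k : ℕ) : ℝ) ^ k := pow_le_pow_left₀ hncnn hnc k
  -- final numeric inequality
  have hnpos : (0 : ℝ) < (n : ℝ) := by
    have : 1 ≤ n := by omega
    exact_mod_cast this
  have hndpos : (0 : ℝ) < (n : ℝ) ^ d := by positivity
  have hCn : C * (c ^ k * (Nat.factorial k : ℝ)) < (n : ℝ) := by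
    have h1 : C * (c ^ k * (Nat.factorial k : ℝ)) ≤ (⌈C * (c ^ k * (Nat.factorial k : ℝ))⌉₊ : ℝ) := Nat.le_ceil _
    have h2 : ((⌈C * (c ^ k * (Nat.factorial k : ℝ))⌉₊ + 1 : ℕ) : ℝ) ≤ (n : ℝ) := by exact_mod_cast hA
    push_cast at h2
    linarith
  have hfinal : C * (n : ℝ) ^ d < ((n : ℝ) / c) ^ k / (Nat.factorial k : ℝ) := by
    have hx : C < (n : ℝ) / (c ^ k * (Nat.factorial k : ℝ)) := by
      rw [lt_div_iff₀ (by positivity)]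
      exact hCn
    have heq : ((n : ℝ) / c) ^ k / (Nat.factorial k : ℝ) = ((n : ℝ) / (c ^ k * (Nat.factorial k : ℝ))) * (n : ℝ) ^ d := by
      rw [hk]
      field_simp [hcpos.ne']
      have e1 : c * c⁻¹ = 1 := mul_inv_cancel₀ hcpos.ne'
      have e2 : c ^ d * c⁻¹ ^ d = 1 := by rw [← mul_pow, e1, one_pow]
      linear_combination ((n : ℝ) * (n : ℝ) ^ d * c ^ d * c⁻¹ ^ d) * e1 + ((n : ℝ) * (n : ℝ) ^ d) * e2
    rw [heq]
    calc C * (n : ℝ) ^ d < ((n : ℝ) / (c ^ k * (Nat.factorial k : ℝ))) * (n : ℝ) ^ d :=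
          mul_lt_mul_of_pos_right hx hndpos
    _ = _ := rfl
  calc C * (n : ℝ) ^ d < ((n : ℝ) / c) ^ k / (Nat.factorial k : ℝ) := hfinal
  _ ≤ ((m + 1 - k : ℕ) : ℝ) ^ k / (Nat.factorial k : ℝ) := by
      gcongr
  _ ≤ (m.choose k : ℝ) := hchoose
  _ ≤ _ := hccard
end

section
/- Let S be an infinite set of positive integers. Let J be a finite index set, and for each j ∈ J let σ_j be a finite type, let w_j : σ_j → ℕ be a weight function with w_j(i) ≥ 1 for all i, and let c_j ∈ ℕ be a shift. For m ∈ ℕ let N_j(m) denote the number of finitely supported functions d : σ_j →₀ ℕ with Σ_i d(i)·w_j(i) = m. Then there exist infinitely many natural numbers n with n ≥ c_j for all j ∈ J such that p_S(n) > Σ_{j ∈ J} N_j(n − c_j). -/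
/-- Upper bound: the number of monomials of weighted degree `m` in variables
indexed by a finite type `σ` (weights `≥ 1`) is at most `(m+1)^card σ`. -/
lemma stmt5_aux_upper {σ : Type*} [Fintype σ] (w : σ → ℕ) (hw : ∀ i, 1 ≤ w i) (m : ℕ) :
    Nat.card {d : σ →₀ ℕ // Finsupp.weight w d = m} ≤ (m + 1) ^ (Fintype.card σ) := by
  classical
  have key : ∀ (d : σ →₀ ℕ), Finsupp.weight w d = m → ∀ i, d i < m + 1 := by
    intro d hd i
    have h1 : d i * w i ≤ Finsupp.weight w d := by
      rw [Finsupp.weight_apply]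
      by_cases h : d i = 0
      · simp [h]
      · rw [Finsupp.sum]
        have := Finset.single_le_sum (f := fun i => d i • w i)
          (fun _ _ => Nat.zero_le _) (Finsupp.mem_support_iff.2 h)
        simpa [smul_eq_mul] using this
    have h2 : d i ≤ d i * w i := Nat.le_mul_of_pos_right _ (hw i)
    omega
  set F : {d : σ →₀ ℕ // Finsupp.weight w d = m} → (σ → Fin (m + 1)) :=
    fun d i => ⟨d.1 i, key d.1 d.2 i⟩ with hF
  have hFinj : Function.Injective F := by
    intro d d' h
    refine Subtype.ext (Finsupp.ext fun i => ?_)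
    exact congrArg Fin.val (congrFun h i)
  have := Nat.card_le_card_of_injective F hFinj
  simpa [Nat.card_eq_fintype_card, Fintype.card_fun] using this

/-- Lower bound: there are at least `(B+1)^k` partitions of `T*M` with parts in `S`,
built from `k` distinct elements of `S` and one further element `T`. -/
lemma stmt5_aux_lower (S : Set ℕ) (k : ℕ) (s : Fin k → ℕ) (hs : ∀ i, s i ∈ S)
    (hsp : ∀ i, 0 < s i) (hsi : Function.Injective s)
    (T : ℕ) (hT : T ∈ S) (hTp : 0 < T) (hTs : ∀ i, s i ≠ T)
    (M B : ℕ) (hBA : ∑ i, B * s i ≤ M) :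
    (B + 1) ^ k ≤ Nat.card {p : (T * M).Partition // ∀ i ∈ p.parts, i ∈ S} := by
  classical
  have hble : ∀ (b : Fin k → Fin (B + 1)), ∑ i, (b i : ℕ) * s i ≤ M := by
    intro b
    refine le_trans (Finset.sum_le_sum fun i _ => ?_) hBA
    exact Nat.mul_le_mul_right _ (Nat.le_of_lt_succ (b i).2)
  set P : (Fin k → Fin (B + 1)) → Multiset ℕ :=
    fun b => (∑ i, Multiset.replicate (T * (b i : ℕ)) (s i))
      + Multiset.replicate (M - ∑ i, (b i : ℕ) * s i) T with hP
  have hmsum : ∀ (f : Fin k → Multiset ℕ), (∑ i, f i).sum = ∑ i, (f i).sum := by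
    intro f
    exact map_sum (⟨⟨Multiset.sum, Multiset.sum_zero⟩, fun a b => Multiset.sum_add a b⟩ :
      Multiset ℕ →+ ℕ) f Finset.univ
  have hsum : ∀ b, (P b).sum = T * M := by
    intro b
    have hX := hble b
    rw [hP]
    simp only [Multiset.sum_add, hmsum, Multiset.sum_replicate, smul_eq_mul]
    have : ∑ i, T * (b i : ℕ) * s i = T * ∑ i, (b i : ℕ) * s i := by
      rw [Finset.mul_sum]; exact Finset.sum_congr rfl fun i _ => by ring
    rw [this]
    have h2 : (M - ∑ i, (b i : ℕ) * s i) * T = T * M - T * ∑ i, (b i : ℕ) * s i := by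
      rw [Nat.sub_mul, mul_comm M T, mul_comm _ T]
    rw [h2]
    have h3 : T * ∑ i, (b i : ℕ) * s i ≤ T * M := Nat.mul_le_mul_left _ hX
    omega
  have hpos : ∀ b, ∀ x ∈ P b, 0 < x := by
    intro b x hx
    rw [hP] at hx
    rcases Multiset.mem_add.1 hx with h | h
    · obtain ⟨i, _, hi⟩ := Multiset.mem_sum.1 h
      rw [Multiset.eq_of_mem_replicate hi]; exact hsp i
    · rw [Multiset.eq_of_mem_replicate h]; exact hTp
  have hmem : ∀ b, ∀ x ∈ P b, x ∈ S := by
    intro b x hx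
    rw [hP] at hx
    rcases Multiset.mem_add.1 hx with h | h
    · obtain ⟨i, _, hi⟩ := Multiset.mem_sum.1 h
      rw [Multiset.eq_of_mem_replicate hi]; exact hs i
    · rw [Multiset.eq_of_mem_replicate h]; exact hT
  set g : (Fin k → Fin (B + 1)) → {p : (T * M).Partition // ∀ i ∈ p.parts, i ∈ S} :=
    fun b => ⟨⟨P b, fun hx => hpos b _ hx, hsum b⟩, fun i hi => hmem b i hi⟩ with hg
  have hcount : ∀ b i, (P b).count (s i) = T * (b i : ℕ) := by
    intro b i
    rw [hP]
    simp only [Multiset.count_add, Multiset.count_sum', Multiset.count_replicate]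
    rw [if_neg (fun h => hTs i h.symm)]
    rw [Finset.sum_eq_single i (fun i' _ hne => if_neg (fun h => hne (hsi h)))
      (fun h => absurd (Finset.mem_univ i) h)]
    simp
  have hginj : Function.Injective g := by
    intro b b' h
    have hPeq : P b = P b' := congrArg (fun p => p.1.parts) h
    funext i
    have : T * (b i : ℕ) = T * (b' i : ℕ) := by
      rw [← hcount b i, ← hcount b' i, hPeq]
    exact Fin.ext (Nat.eq_of_mul_eq_mul_left hTp this)
  have := Nat.card_le_card_of_injective g hginj
  simpa [Nat.card_eq_fintype_card] using this

/-- Let `S` be an infinite set of positive integers, `J` a finite index set, and for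
each `j ∈ J` let `σ j` be a finite type with weight function `w j : σ j → ℕ` taking
values `≥ 1`, and let `c j ∈ ℕ` be a shift.  Writing `N j m` for the number of
finitely supported `d : σ j →₀ ℕ` with `∑ i, d i * w j i = m`, there exist
infinitely many `n` with `n ≥ c j` for all `j` and
`p_S(n) > ∑ j, N j (n - c j)`. -/
theorem stmt5 (S : Set ℕ) (hS : ∀ s ∈ S, 0 < s) (hinf : S.Infinite)
    (J : Type*) [Fintype J] (σ : J → Type*) [∀ j, Fintype (σ j)]
    (w : (j : J) → σ j → ℕ) (hw : ∀ j i, 1 ≤ w j i) (c : J → ℕ) :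
    {n : ℕ | (∀ j, c j ≤ n) ∧
      ∑ j : J, Nat.card {d : σ j →₀ ℕ // Finsupp.weight (w j) d = n - c j} <
        Nat.card {p : n.Partition // ∀ i ∈ p.parts, i ∈ S}}.Infinite := by
  classical
  set e : ℕ ↪ ↥S := Set.Infinite.natEmbedding S hinf with he
  set D : ℕ := Finset.univ.sup (fun j => Fintype.card (σ j)) with hD
  set s : Fin (D + 1) → ℕ := fun i => (e (i : ℕ) : ℕ) with hsdef
  set T : ℕ := (e (D + 1) : ℕ) with hT
  have hsmem : ∀ i, s i ∈ S := fun i => (e (i : ℕ)).2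
  have hsp : ∀ i, 0 < s i := fun i => hS _ (hsmem i)
  have hTmem : T ∈ S := (e (D + 1)).2
  have hTp : 0 < T := hS _ hTmem
  have hsi : Function.Injective s := by
    intro i i' h
    have := e.injective (Subtype.ext h)
    exact Fin.ext this
  have hTs : ∀ i : Fin (D + 1), s i ≠ T := by
    intro i h
    have := e.injective (Subtype.ext h)
    have hlt := i.2
    omega
  set A : ℕ := ∑ i : Fin (D + 1), s i with hA
  have hApos : 0 < A := Finset.sum_pos (fun i _ => hsp i) ⟨0, Finset.mem_univ _⟩
  set C0 : ℕ := Finset.univ.sup c with hC0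
  set K : ℕ := Fintype.card J * (T + 1) ^ D * A ^ (D + 1) with hK
  set M0 : ℕ := K + C0 + 1 with hM0
  apply Set.infinite_of_injective_forall_mem (f := fun m : ℕ => T * (M0 + m))
  case hi =>
    intro a b h
    have := Nat.eq_of_mul_eq_mul_left hTp h
    omega
  case hf =>
    intro m
    set M : ℕ := M0 + m with hM
    set n : ℕ := T * M with hn
    set B : ℕ := M / A with hB
    have hM1 : 1 ≤ M := by omega
    have hKM : K + 1 ≤ M := by omega
    constructor
    · intro j
      have h1 : c j ≤ C0 := Finset.le_sup (Finset.mem_univ j)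
      have h2 : M ≤ T * M := Nat.le_mul_of_pos_left M hTp
      omega
    · -- main inequality
      have h1 : ∑ j : J, Nat.card {d : σ j →₀ ℕ // Finsupp.weight (w j) d = n - c j}
          ≤ Fintype.card J * (n + 1) ^ D := by
        calc ∑ j : J, Nat.card {d : σ j →₀ ℕ // Finsupp.weight (w j) d = n - c j}
            ≤ ∑ j : J, (n - c j + 1) ^ (Fintype.card (σ j)) :=
              Finset.sum_le_sum fun j _ => stmt5_aux_upper (w j) (hw j) _
          _ ≤ ∑ _j : J, (n + 1) ^ D := by
              refine Finset.sum_le_sum fun j _ => ?_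
              have hle1 : n - c j + 1 ≤ n + 1 := by omega
              refine le_trans (Nat.pow_le_pow_left hle1 _) ?_
              have hcard : Fintype.card (σ j) ≤ D := by
                rw [hD]
                exact Finset.le_sup (f := fun j => Fintype.card (σ j)) (Finset.mem_univ j)
              exact Nat.pow_le_pow_right (Nat.le_add_left 1 n) hcard
          _ = Fintype.card J * (n + 1) ^ D := by
              rw [Finset.sum_const, smul_eq_mul, Finset.card_univ]
      have h2 : (B + 1) ^ (D + 1) ≤ Nat.card {p : n.Partition // ∀ i ∈ p.parts, i ∈ S} := by
        rw [hn]
        refine stmt5_aux_lower S (D + 1) s hsmem hsp hsi T hTmem hTp hTs M B ?_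
        rw [← Finset.mul_sum, ← hA]
        calc B * A = M / A * A := by rw [hB]
          _ ≤ M := Nat.div_mul_le_self M A
      have hAB : M + 1 ≤ A * (B + 1) := by
        have hd := Nat.div_add_mod M A
        have hm : M % A < A := Nat.mod_lt _ hApos
        have h3 : A * (M / A + 1) = A * (M / A) + A := by ring
        rw [hB, h3]
        omega
      have hn1 : n + 1 ≤ (T + 1) * M := by
        have : (T + 1) * M = T * M + M := by ring
        rw [hn]; omega
      have h3 : Fintype.card J * (n + 1) ^ D < (B + 1) ^ (D + 1) := by
        have key : Fintype.card J * (n + 1) ^ D * A ^ (D + 1)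
            < (B + 1) ^ (D + 1) * A ^ (D + 1) := by
          calc Fintype.card J * (n + 1) ^ D * A ^ (D + 1)
              ≤ Fintype.card J * ((T + 1) * M) ^ D * A ^ (D + 1) := by
                have := Nat.pow_le_pow_left hn1 D
                exact Nat.mul_le_mul_right _ (Nat.mul_le_mul_left _ this)
            _ = K * M ^ D := by rw [hK, mul_pow]; ring
            _ < (M + 1) * M ^ D := by
                have hMp : 0 < M ^ D := Nat.pow_pos hM1
                exact Nat.mul_lt_mul_of_lt_of_le (by omega) le_rfl hMp
            _ ≤ (M + 1) ^ (D + 1) := by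
                rw [pow_succ']
                exact Nat.mul_le_mul_left _ (Nat.pow_le_pow_left (by omega) D)
            _ ≤ (A * (B + 1)) ^ (D + 1) := Nat.pow_le_pow_left hAB _
            _ = (B + 1) ^ (D + 1) * A ^ (D + 1) := by rw [mul_pow]; ring
        exact Nat.lt_of_mul_lt_mul_right key
      exact lt_of_le_of_lt h1 (lt_of_lt_of_le h3 h2)
end
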